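/- Let e ≥ 8 be an integer, N real with N ≥ 104978 and F(N,e) ≥ 0, and let δ = (2N+1)/((N+1)(e−2)). Let S be a numerical semigroup with embedding dimension e satisfying Zhai's inequality d(S) ≥ 1/e − (m(S)−1)(e−2)/((f(S)+1)·2e). If m(S)/(f(S)+1) ≤ δ, then d(S) > 1/((2N+2)e) ≥ ((2N+1)/((2N+2)(e−2)))^e. -/

import Mathlib

/-- A numerical semigroup: additively closed subset of ℕ containing 0 with finite complement. -/
def IsNumSgp (S : Set ℕ) : Prop :=
  0 ∈ S ∧ (∀ a ∈ S, ∀ b ∈ S, a + b ∈ S) ∧ Sᶜ.Finite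

/-- The genus: number of gaps. -/
noncomputable def genus (S : Set ℕ) : ℕ := Sᶜ.ncard

/-- The Frobenius number: largest gap. -/
noncomputable def frob (S : Set ℕ) : ℕ := sSup Sᶜ

/-- Atoms: minimal generators S* \ (S* + S*). -/
def atoms (S : Set ℕ) : Set ℕ :=
  (S \ {0}) \ {n | ∃ a ∈ S \ {0}, ∃ b ∈ S \ {0}, n = a + b}

/-- Embedding dimension: number of atoms. -/
noncomputable def edim (S : Set ℕ) : ℕ := (atoms S).ncard

/-- Multiplicity: smallest positive element. -/
noncomputable def mult (S : Set ℕ) : ℕ := sInf (S \ {0})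

/-- Density of S in [0, f(S)]. -/
noncomputable def density (S : Set ℕ) : ℝ :=
  ((frob S : ℝ) + 1 - genus S) / ((frob S : ℝ) + 1)


noncomputable def F (x : ℝ) (e : ℕ) : ℝ :=
  1 / ((2*x+2)*e) - ((2*x+1) / ((2*x+2)*((e:ℝ)-2)))^e

theorem prop2_a (S : Set ℕ) (hS : IsNumSgp S) (hne : S ≠ Set.univ)
    (he : 8 ≤ edim S) (N : ℝ) (hN : 104978 ≤ N) (hF : F N (edim S) ≥ 0)
    (δ : ℝ) (hδ : δ = (2*N+1) / ((N+1) * ((edim S : ℝ) - 2)))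
    (hzhai : density S ≥ 1 / (edim S : ℝ) -
      ((mult S : ℝ) - 1) * ((edim S : ℝ) - 2) / (((frob S : ℝ) + 1) * (2 * edim S)))
    (hm : (mult S : ℝ) / ((frob S : ℝ) + 1) ≤ δ) :
    density S > 1 / ((2*N+2) * edim S) ∧
      1 / ((2*N+2) * edim S) ≥ ((2*N+1) / ((2*N+2) * ((edim S : ℝ) - 2)))^(edim S) := by
  have he' : (8:ℝ) ≤ (edim S : ℝ) := by exact_mod_cast he
  have hf : (0:ℝ) ≤ (frob S : ℝ) := Nat.cast_nonneg _
  have hfpos : (0:ℝ) < (frob S : ℝ) + 1 := by linarith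
  have hepos : (0:ℝ) < (edim S : ℝ) := by linarith
  have he2 : (0:ℝ) < (edim S : ℝ) - 2 := by linarith
  have hNpos : (0:ℝ) < N + 1 := by linarith
  constructor
  · set e : ℝ := (edim S : ℝ)
    set f : ℝ := (frob S : ℝ)
    set m : ℝ := (mult S : ℝ)
    set A : ℝ := density S
    have h1 : 1/e - (m-1)*(e-2)/((f+1)*(2*e)) =
        (2*(f+1) - (m-1)*(e-2))/((f+1)*(2*e)) := by
      field_simp
    have h1' : 2*(f+1) - (m-1)*(e-2) ≤ A * ((f+1)*(2*e)) := by
      rw [h1] at hzhai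
      exact (div_le_iff₀ (by positivity)).mp hzhai
    have h2 : m * ((N+1)*(e-2)) ≤ (2*N+1)*(f+1) := by
      rw [hδ] at hm
      exact (div_le_div_iff₀ hfpos (by positivity)).mp hm
    rw [gt_iff_lt, div_lt_iff₀ (by positivity)]
    nlinarith [mul_le_mul_of_nonneg_right h1' hNpos.le, mul_pos he2 hNpos,
      mul_pos hfpos hNpos]
  · have := hF
    unfold F at this
    linarith
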